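/- Let k, t, q, s be integers with q ≥ 2, k > t ≥ 2 and s ≥ 0. If s < (R_q(k−t+1, k, …, k) − q(k−t)) / (qt), then K_k and K_k + sK_t are q-Ramsey-equivalent. -/
import Mathlib


open SimpleGraph

/-- The colouring `c` contains a copy of `H` in `G` all of whose edges have colour `i`. -/
def HasMonoCopyColor {V W : Type*} (G : SimpleGraph V) (H : SimpleGraph W) {q : ℕ}
    (c : Sym2 V → Fin q) (i : Fin q) : Prop :=
  ∃ f : W ↪ V, ∀ a b, H.Adj a b → G.Adj (f a) (f b) ∧ c s(f a, f b) = i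

/-- The colouring `c` contains a monochromatic copy of `H` in `G`. -/
def HasMonoCopy {V W : Type*} (G : SimpleGraph V) (H : SimpleGraph W) {q : ℕ}
    (c : Sym2 V → Fin q) : Prop :=
  ∃ i : Fin q, HasMonoCopyColor G H c i

/-- `G` is `q`-Ramsey for `H`: every `q`-colouring of the edges of `G` contains a
monochromatic copy of `H`. -/
def IsRamsey (q : ℕ) {V W : Type*} (G : SimpleGraph V) (H : SimpleGraph W) : Prop :=
  ∀ c : Sym2 V → Fin q, HasMonoCopy G H c

/-- `H` and `H'` are `q`-Ramsey-equivalent: a (finite) graph is `q`-Ramsey for `H`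
iff it is `q`-Ramsey for `H'`. -/
def RamseyEquiv (q : ℕ) {W W' : Type*} (H : SimpleGraph W) (H' : SimpleGraph W') : Prop :=
  ∀ (V : Type) [Fintype V] (G : SimpleGraph V), IsRamsey q G H ↔ IsRamsey q G H'

/-- `K_k + s·K_t`: the vertex-disjoint union of one copy of `K_k` with `s` copies of `K_t`. -/
def cliquePlusCliques (k s t : ℕ) : SimpleGraph (Fin k ⊕ Fin s × Fin t) :=
  SimpleGraph.fromRel (fun x y =>
    match x, y with
    | Sum.inl _, Sum.inl _ => True
    | Sum.inr a, Sum.inr b => a.1 = b.1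
    | _, _ => False)

/-- `n` has the `q`-colour Ramsey property for the clique sizes `k i`. -/
def RamseyWitness (n q : ℕ) (k : Fin q → ℕ) : Prop :=
  ∀ c : Sym2 (Fin n) → Fin q, ∃ (i : Fin q) (S : Finset (Fin n)),
    S.card = k i ∧ ∀ x ∈ S, ∀ y ∈ S, x ≠ y → c s(x, y) = i

/-- The multicolour Ramsey number `R(k 0, …, k (q-1))`. -/
noncomputable def multiRamsey (q : ℕ) (k : Fin q → ℕ) : ℕ :=
  sInf { n | RamseyWitness n q k }

section aux
variable {V : Type*} {q : ℕ}

def MonoClique (G : SimpleGraph V) (c : Sym2 V → Fin q) (i : Fin q) (S : Finset V) : Prop :=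
  ∀ x ∈ S, ∀ y ∈ S, x ≠ y → G.Adj x y ∧ c s(x, y) = i

lemma MonoClique.subset {G : SimpleGraph V} {c : Sym2 V → Fin q} {i : Fin q} {S T : Finset V}
    (h : MonoClique G c i T) (hST : S ⊆ T) : MonoClique G c i S :=
  fun x hx y hy => h x (hST hx) y (hST hy)

lemma greedy [DecidableEq V] (t : ℕ) :
    ∀ (P : Finset V → Prop), (∀ T, P T → T.card = t) → ∀ s : ℕ,
    (∃ T : Fin (s + 1) → Finset V, (∀ j, P (T j)) ∧
        ∀ j j', j ≠ j' → Disjoint (T j) (T j'))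
      ∨ (∃ U : Finset V, U.card ≤ s * t ∧ ∀ T, P T → ¬Disjoint T U) := by
  intro P hc s
  induction s generalizing P with
  | zero =>
    by_cases h : ∃ T, P T
    · obtain ⟨T₀, hT₀⟩ := h
      exact Or.inl ⟨fun _ => T₀, fun _ => hT₀,
        fun j j' hj => absurd (Subsingleton.elim (α := Fin 1) j j') hj⟩
    · exact Or.inr ⟨∅, by simp, fun T hT => absurd ⟨T, hT⟩ h⟩
  | succ n ih =>
    by_cases h : ∃ T, P T
    · obtain ⟨T₀, hT₀⟩ := h
      rcases ih (fun T => P T ∧ Disjoint T T₀) (fun T hT => hc T hT.1) with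
        ⟨T, hTP, hTd⟩ | ⟨U, hU, hUc⟩
      · refine Or.inl ⟨Fin.cons T₀ T, ?_, ?_⟩
        · intro j
          refine Fin.cases ?_ ?_ j
          · simpa using hT₀
          · intro j'; simpa using (hTP j').1
        · intro j j' hjj'
          rcases Fin.eq_zero_or_eq_succ j with rfl | ⟨a, rfl⟩ <;>
            rcases Fin.eq_zero_or_eq_succ j' with rfl | ⟨b, rfl⟩
          · exact absurd rfl hjj'
          · simp only [Fin.cons_zero, Fin.cons_succ]
            exact ((hTP b).2).symm
          · simp only [Fin.cons_zero, Fin.cons_succ]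
            exact (hTP a).2
          · simp only [Fin.cons_succ]
            exact hTd a b (fun e => hjj' (by rw [e]))
      · refine Or.inr ⟨U ∪ T₀, ?_, ?_⟩
        · calc (U ∪ T₀).card ≤ U.card + T₀.card := Finset.card_union_le _ _
            _ ≤ n * t + t := by
              gcongr
              exact (hc T₀ hT₀).le
            _ = (n + 1) * t := by ring
        · intro T hT
          rw [Finset.disjoint_union_right]
          rintro ⟨h1, h2⟩
          exact hUc T ⟨hT, h2⟩ h1
    · exact Or.inr ⟨∅, by simp, fun T hT => absurd ⟨T, hT⟩ h⟩

lemma hasMonoCopy_of_cliques {G : SimpleGraph V} {c : Sym2 V → Fin q} {i : Fin q}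
    {k s t : ℕ} {K : Finset V} {T : Fin s → Finset V}
    (hK : K.card = k) (hKm : MonoClique G c i K)
    (hTc : ∀ j, (T j).card = t) (hTm : ∀ j, MonoClique G c i (T j))
    (hTd : ∀ j j', j ≠ j' → Disjoint (T j) (T j'))
    (hKT : ∀ j, Disjoint K (T j)) :
    HasMonoCopyColor G (cliquePlusCliques k s t) c i := by
  classical
  let eK : K ≃ Fin k := K.equivFinOfCardEq hK
  let eT : (j : Fin s) → (T j) ≃ Fin t := fun j => (T j).equivFinOfCardEq (hTc j)
  let f : Fin k ⊕ Fin s × Fin t → V :=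
    Sum.elim (fun a => (eK.symm a : V)) (fun p => ((eT p.1).symm p.2 : V))
  have hfK : ∀ a, f (Sum.inl a) ∈ K := fun a => (eK.symm a).2
  have hfT : ∀ p : Fin s × Fin t, f (Sum.inr p) ∈ T p.1 := fun p => ((eT p.1).symm p.2).2
  have hinj : Function.Injective f := by
    rintro (a | ⟨j, x⟩) (b | ⟨j', y⟩) hab
    · have : eK.symm a = eK.symm b := Subtype.ext hab
      rw [eK.symm.injective this]
    · exact (Finset.disjoint_left.1 (hKT j') (hab ▸ hfK a) (hfT (j', y))).elim
    · exact (Finset.disjoint_left.1 (hKT j) (hfK b) (hab ▸ hfT (j, x))).elim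
    · by_cases hjj : j = j'
      · subst hjj
        have : (eT j).symm x = (eT j).symm y := Subtype.ext hab
        rw [(eT j).symm.injective this]
      · exact (Finset.disjoint_left.1 (hTd j j' hjj) (hfT (j, x)) (hab ▸ hfT (j', y))).elim
  refine ⟨⟨f, hinj⟩, ?_⟩
  rintro (a | ⟨j, x⟩) (b | ⟨j', y⟩) hab <;>
    rw [cliquePlusCliques, SimpleGraph.fromRel_adj] at hab
  · have hne : f (Sum.inl a) ≠ f (Sum.inl b) := fun h => hab.1 (by
      have := hinj h; exact this)
    exact hKm _ (hfK a) _ (hfK b) hne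
  · simp at hab
  · simp at hab
  · have hj : j = j' := by
      rcases hab.2 with h | h
      · exact h
      · exact h.symm
    subst hj
    have hne : f (Sum.inr (j, x)) ≠ f (Sum.inr (j, y)) := fun h => hab.1 (by
      have := hinj h; rw [this])
    exact hTm j _ (hfT (j, x)) _ (hfT (j, y)) hne

lemma monoClique_of_copy {G : SimpleGraph V} {c : Sym2 V → Fin q} {i : Fin q} {k : ℕ}
    (h : HasMonoCopyColor G (⊤ : SimpleGraph (Fin k)) c i) :
    ∃ K : Finset V, K.card = k ∧ MonoClique G c i K := by
  classical
  obtain ⟨f, hf⟩ := h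
  refine ⟨Finset.univ.map f, by simp, ?_⟩
  intro x hx y hy hxy
  simp only [Finset.mem_map, Finset.mem_univ, true_and] at hx hy
  obtain ⟨a, rfl⟩ := hx
  obtain ⟨b, rfl⟩ := hy
  have hab : a ≠ b := fun h => hxy (by rw [h])
  exact hf a b (by simpa using hab)

end aux

/-- For `q ≥ 2`, `k > t ≥ 2` and `s < (R_q(k−t+1,k,…,k) − q(k−t))/(qt)`,
the graphs `K_k` and `K_k + s·K_t` are `q`-Ramsey-equivalent. -/
theorem stmt6 (k t q s : ℕ) (hq : 2 ≤ q) (ht : 2 ≤ t) (htk : t < k)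
    (hs : q * t * s + q * (k - t) <
      multiRamsey q (fun i => if (i : ℕ) = 0 then k - t + 1 else k)) :
    RamseyEquiv q (⊤ : SimpleGraph (Fin k)) (cliquePlusCliques k s t) := by
  classical
  haveI : NeZero q := ⟨by omega⟩
  intro V _ G
  constructor
  · intro hG c
    by_contra hno
    set kb : Fin q → ℕ := fun i => if (i : ℕ) = 0 then k - t + 1 else k with hkb
    have hkble : ∀ i₀, kb i₀ ≤ k := by
      intro i₀; rw [hkb]; dsimp only; split <;> omega
    obtain ⟨m, hm⟩ : ∃ m, m = q * t * s + q * (k - t) := ⟨_, rfl⟩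
    have hm0 : 0 < m := by
      have : 0 < q * (k - t) := Nat.mul_pos (by omega) (by omega)
      omega
    -- a colouring of `Fin m` with no large monochromatic sets
    have hnw : ¬ RamseyWitness m q kb := by
      intro h
      have h2 : multiRamsey q kb ≤ m := Nat.sInf_le h
      rw [← hm] at hs
      omega
    rw [RamseyWitness] at hnw
    push_neg at hnw
    obtain ⟨ψ, hψ⟩ := hnw
    have hψb : ∀ (i₀ : Fin q) (S : Finset (Fin m)),
        (∀ x ∈ S, ∀ y ∈ S, x ≠ y → ψ s(x, y) = i₀) → S.card < kb i₀ := by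
      intro i₀ S hmono
      by_contra hge
      push_neg at hge
      obtain ⟨S', hS'sub, hS'card⟩ := Finset.exists_subset_card_eq hge
      obtain ⟨x, hx, y, hy, hxy, hne⟩ := hψ i₀ S' hS'card
      exact hne (hmono x (hS'sub hx) y (hS'sub hy) hxy)
    -- a monochromatic `K_k` for the colouring `c`
    obtain ⟨istar, hcopy⟩ := hG c
    obtain ⟨Kstar, hKstarcard, hKstarmono⟩ := monoClique_of_copy hcopy
    rcases s with _ | s'
    · exact hno ⟨istar, hasMonoCopy_of_cliques hKstarcard hKstarmono
        (T := fun j : Fin 0 => j.elim0) (fun j => j.elim0) (fun j => j.elim0)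
        (fun j => j.elim0) (fun j => j.elim0)⟩
    -- per-colour covers
    have hW : ∀ i : Fin q, ∃ Wi : Finset V, Wi.card ≤ k + s' * t ∧
        (∀ S, S.card = k → MonoClique G c i S → ¬Disjoint S Wi) ∧
        (∀ T, T.card = t → MonoClique G c i T → Disjoint T Wi →
          ¬∃ S : Finset V, S.card = k ∧ MonoClique G c i S) := by
      intro i
      by_cases hK : ∃ S : Finset V, S.card = k ∧ MonoClique G c i S
      · obtain ⟨Ki, hKic, hKim⟩ := hK
        rcases greedy t (fun T => T.card = t ∧ MonoClique G c i T ∧ Disjoint T Ki)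
            (fun T hT => hT.1) s' with ⟨T, hTP, hTd⟩ | ⟨U, hUcard, hUcov⟩
        · exact absurd ⟨i, hasMonoCopy_of_cliques hKic hKim (fun j => (hTP j).1)
            (fun j => (hTP j).2.1) hTd (fun j => ((hTP j).2.2).symm)⟩ hno
        · refine ⟨Ki ∪ U, ?_, ?_, ?_⟩
          · calc (Ki ∪ U).card ≤ Ki.card + U.card := Finset.card_union_le _ _
              _ ≤ k + s' * t := by rw [hKic]; gcongr
          · intro S hScard hSmono hdisj
            rw [Finset.disjoint_union_right] at hdisj
            obtain ⟨T, hTsub, hTcard⟩ := Finset.exists_subset_card_eq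
              (show t ≤ S.card by omega)
            exact hUcov T ⟨hTcard, hSmono.subset hTsub,
              hdisj.1.mono_left hTsub⟩ (hdisj.2.mono_left hTsub)
          · intro T hTcard hTmono hdisj _
            rw [Finset.disjoint_union_right] at hdisj
            exact hUcov T ⟨hTcard, hTmono, hdisj.1⟩ hdisj.2
      · exact ⟨∅, by simp, fun S hS1 hS2 _ => hK ⟨S, hS1, hS2⟩, fun _ _ _ _ h => hK h⟩
    choose Wf hWcard hC1 hC2 using hW
    set W : Finset V := Finset.univ.biUnion Wf with hWdef
    have hWsub : ∀ i, Wf i ⊆ W := fun i => Finset.subset_biUnion_of_mem Wf (Finset.mem_univ i)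
    have hWle : W.card ≤ m := by
      calc W.card ≤ ∑ i, (Wf i).card := Finset.card_biUnion_le
        _ ≤ ∑ _i : Fin q, (k + s' * t) := Finset.sum_le_sum (fun i _ => hWcard i)
        _ = q * (k + s' * t) := by
          rw [Finset.sum_const, Finset.card_univ, Fintype.card_fin, smul_eq_mul]
        _ = m := by
          obtain ⟨d, hd⟩ := Nat.le.dest htk.le
          rw [hm, ← hd]
          have h1 : t + d - t = d := by omega
          rw [h1]
          ring
    obtain ⟨ι⟩ : Nonempty (↥W ↪ Fin m) := Function.Embedding.nonempty_of_card_le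
      (by simpa using hWle)
    set σ : Equiv.Perm (Fin q) := Equiv.swap 0 istar with hσ
    set g : V → V → Fin q := fun x y =>
      if h : x ∈ W ∧ y ∈ W then σ (ψ s(ι ⟨x, h.1⟩, ι ⟨y, h.2⟩))
      else if x ∈ W ∨ y ∈ W then istar else c s(x, y) with hg
    have hgsymm : ∀ x y, g x y = g y x := by
      intro x y
      simp only [hg]
      by_cases hx : x ∈ W <;> by_cases hy : y ∈ W
      · rw [dif_pos ⟨hx, hy⟩, dif_pos ⟨hy, hx⟩, Sym2.eq_swap]
      · rw [dif_neg (show ¬(x ∈ W ∧ y ∈ W) from fun h => hy h.2),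
          dif_neg (show ¬(y ∈ W ∧ x ∈ W) from fun h => hy h.1),
          if_pos (Or.inl hx), if_pos (Or.inr hx)]
      · rw [dif_neg (show ¬(x ∈ W ∧ y ∈ W) from fun h => hx h.1),
          dif_neg (show ¬(y ∈ W ∧ x ∈ W) from fun h => hx h.2),
          if_pos (Or.inr hy), if_pos (Or.inl hy)]
      · rw [dif_neg (show ¬(x ∈ W ∧ y ∈ W) from fun h => hx h.1),
          dif_neg (show ¬(y ∈ W ∧ x ∈ W) from fun h => hx h.2),
          if_neg (show ¬(x ∈ W ∨ y ∈ W) from fun h => h.elim hx hy),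
          if_neg (show ¬(y ∈ W ∨ x ∈ W) from fun h => h.elim hy hx), Sym2.eq_swap]
    set c' : Sym2 V → Fin q := Sym2.lift ⟨g, hgsymm⟩ with hc'
    have hc'eval : ∀ x y, c' s(x, y) = g x y := fun x y => rfl
    obtain ⟨i, hcopy'⟩ := hG c'
    obtain ⟨K, hKcard, hKmono⟩ := monoClique_of_copy hcopy'
    set A : Finset V := K.filter (· ∈ W) with hA
    set B : Finset V := K.filter (· ∉ W) with hB
    have hABcard : A.card + B.card = k := by
      rw [hA, hB, Finset.card_filter_add_card_filter_not]
      exact hKcard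
    have hAW : ∀ x ∈ A, x ∈ W := fun x hx => (Finset.mem_filter.1 hx).2
    have hBW : ∀ x ∈ B, x ∉ W := fun x hx => (Finset.mem_filter.1 hx).2
    have hAK : A ⊆ K := Finset.filter_subset _ _
    have hBK : B ⊆ K := Finset.filter_subset _ _
    set jm : V → Fin m := fun x => if h : x ∈ W then ι ⟨x, h⟩ else ⟨0, hm0⟩ with hjm
    have hjmA : Set.InjOn jm A := by
      intro x hx y hy hxy
      simp only [hjm] at hxy
      rw [dif_pos (hAW x hx), dif_pos (hAW y hy)] at hxy
      exact congrArg Subtype.val (ι.injective hxy)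
    have hAmono : ∀ x ∈ A, ∀ y ∈ A, x ≠ y → ψ s(jm x, jm y) = σ i := by
      intro x hx y hy hxy
      have h1 := (hKmono x (hAK hx) y (hAK hy) hxy).2
      rw [hc'eval] at h1
      simp only [hg] at h1
      rw [dif_pos ⟨hAW x hx, hAW y hy⟩] at h1
      have h3 : σ (ψ s(jm x, jm y)) = i := by
        simp only [hjm]
        rw [dif_pos (hAW x hx), dif_pos (hAW y hy)]
        exact h1
      apply σ.injective
      rw [h3, hσ, Equiv.swap_apply_self]
    have hAcard : A.card < kb (σ i) := by
      have hb := hψb (σ i) (A.image jm) ?_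
      · rwa [Finset.card_image_of_injOn hjmA] at hb
      · intro u hu v hv huv
        obtain ⟨x, hx, rfl⟩ := Finset.mem_image.1 hu
        obtain ⟨y, hy, rfl⟩ := Finset.mem_image.1 hv
        exact hAmono x hx y hy (fun e => huv (by rw [e]))
    rcases Finset.eq_empty_or_nonempty B with hBe | hBne
    · have hB0 : B.card = 0 := by rw [hBe]; rfl
      have := hkble (σ i)
      omega
    rcases Finset.eq_empty_or_nonempty A with hAe | hAne
    · have hKdisj : Disjoint K W := by
        rw [Finset.disjoint_left]
        intro x hx hxW
        have hmem : x ∈ A := by rw [hA]; exact Finset.mem_filter.2 ⟨hx, hxW⟩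
        rw [hAe] at hmem
        exact absurd hmem (Finset.notMem_empty x)
      have hKc : MonoClique G c i K := by
        intro x hx y hy hxy
        obtain ⟨hadj, hcol⟩ := hKmono x hx y hy hxy
        refine ⟨hadj, ?_⟩
        rw [hc'eval] at hcol
        simp only [hg] at hcol
        rw [dif_neg (show ¬(x ∈ W ∧ y ∈ W) from fun h => Finset.disjoint_left.1 hKdisj hx h.1),
          if_neg (show ¬(x ∈ W ∨ y ∈ W) from fun h => h.elim (Finset.disjoint_left.1 hKdisj hx)
            (Finset.disjoint_left.1 hKdisj hy))] at hcol
        exact hcol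
      exact hC1 i K hKcard hKc (hKdisj.mono_right (hWsub i))
    obtain ⟨a, ha⟩ := hAne
    obtain ⟨b, hb⟩ := hBne
    have hab : a ≠ b := fun e => (hBW b hb) (e ▸ hAW a ha)
    have hii : i = istar := by
      have h1 := (hKmono a (hAK ha) b (hBK hb) hab).2
      rw [hc'eval] at h1
      simp only [hg] at h1
      rw [dif_neg (show ¬(a ∈ W ∧ b ∈ W) from fun h => hBW b hb h.2),
        if_pos (Or.inl (hAW a ha))] at h1
      exact h1.symm
    have hBmono : MonoClique G c istar B := by
      intro x hx y hy hxy
      obtain ⟨hadj, hcol⟩ := hKmono x (hBK hx) y (hBK hy) hxy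
      refine ⟨hadj, ?_⟩
      rw [hc'eval] at hcol
      simp only [hg] at hcol
      rw [dif_neg (show ¬(x ∈ W ∧ y ∈ W) from fun h => hBW x hx h.1),
        if_neg (show ¬(x ∈ W ∨ y ∈ W) from fun h => h.elim (hBW x hx) (hBW y hy))] at hcol
      exact hcol.trans hii
    have hBcard : B.card ≤ t - 1 := by
      by_contra hge
      push_neg at hge
      obtain ⟨T, hTsub, hTcard⟩ := Finset.exists_subset_card_eq
        (show t ≤ B.card by omega)
      refine hC2 istar T hTcard (hBmono.subset hTsub) ?_ ⟨Kstar, hKstarcard, hKstarmono⟩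
      exact Finset.disjoint_left.2 fun {x} hx hxw => hBW x (hTsub hx) (hWsub istar hxw)
    have h2 : σ i = 0 := by rw [hσ, hii]; exact Equiv.swap_apply_right 0 istar
    rw [h2] at hAcard
    have h3 : kb 0 = k - t + 1 := by rw [hkb]; simp
    omega
  · intro hG' c
    obtain ⟨i, f, hf⟩ := hG' c
    refine ⟨i, (Function.Embedding.inl).trans f, fun a b hab => ?_⟩
    refine hf _ _ ?_
    rw [cliquePlusCliques, SimpleGraph.fromRel_adj]
    exact ⟨fun h => hab.ne (Sum.inl.inj h), Or.inl trivial⟩
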